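/- For every θ with sin 2θ ≠ 0 and sinθ ≠ cosθ, the maximum of the eleven inner product values occurring in C_θ is at least (√7−1)/3, i.e. max{0, sin 2θ, sinθ, cosθ, sin²θ − cos²θ/2, cos²θ − sin²θ/2, −sinθ/2, −cosθ/2, (sin 2θ)/4, −(sin 2θ)/2, −1/2} ≥ (√7−1)/3. -/
import Mathlib


open Real

lemma stmt4_aux (s c t : ℝ) (hpyth : s ^ 2 + c ^ 2 = 1) (htpos : (1/2 : ℝ) ≤ t)
    (ht2 : 1 - 3 * t ^ 2 / 2 = t) :
    t ≤ 2 * s * c ∨ t ≤ s ∨ t ≤ c ∨ t ≤ s ^ 2 - c ^ 2 / 2 ∨ t ≤ c ^ 2 - s ^ 2 / 2 := by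
  by_cases hm : s ^ 2 ≤ t ^ 2 ∨ c ^ 2 ≤ t ^ 2
  · rcases hm with hm | hm
    · right; right; right; right; nlinarith
    · right; right; right; left; nlinarith
  · push_neg at hm
    obtain ⟨hs, hc⟩ := hm
    rcases le_or_gt s 0 with hs0 | hs0
    · rcases le_or_gt c 0 with hc0 | hc0
      · have hs' : t < -s := by nlinarith
        have hc' : t < -c := by nlinarith
        left
        nlinarith [mul_lt_mul'' hs' hc' (by linarith : (0:ℝ) ≤ t) (by linarith : (0:ℝ) ≤ t)]
      · right; right; left; nlinarith
    · right; left; nlinarith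

theorem stmt4 (θ : ℝ) (h1 : Real.sin (2 * θ) ≠ 0) (h2 : Real.sin θ ≠ Real.cos θ) :
    (Real.sqrt 7 - 1) / 3 ≤
      max 0 (max (Real.sin (2 * θ)) (max (Real.sin θ) (max (Real.cos θ)
        (max (Real.sin θ ^ 2 - Real.cos θ ^ 2 / 2) (max (Real.cos θ ^ 2 - Real.sin θ ^ 2 / 2)
          (max (-(Real.sin θ / 2)) (max (-(Real.cos θ / 2)) (max (Real.sin (2 * θ) / 4)
            (max (-(Real.sin (2 * θ) / 2)) (-(1/2))))))))))) := by
  have h7 : Real.sqrt 7 ^ 2 = 7 := Real.sq_sqrt (by norm_num)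
  have h7b : (5/2 : ℝ) ≤ Real.sqrt 7 := by nlinarith [Real.sqrt_nonneg 7]
  have key := stmt4_aux (Real.sin θ) (Real.cos θ) ((Real.sqrt 7 - 1) / 3)
    (Real.sin_sq_add_cos_sq θ) (by linarith) (by nlinarith)
  rw [← Real.sin_two_mul θ] at key
  simp only [le_max_iff]
  tauto
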